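/- In the Frohman–Gelca algebra A_t (t nonzero, not a root of unity), the coset of e_{(0,0)} in A_t/C(A_t) is not in the span of the cosets of e_{(2,0)}, e_{(0,1)}, e_{(1,0)}, e_{(1,1)}; moreover, the cosets of e_{(0,0)}, e_{(2,0)}, e_{(0,1)}, e_{(1,0)}, e_{(1,1)} form a basis of A_t/C(A_t). -/

import Mathlib

noncomputable section

def negRel : Setoid (ℤ × ℤ) where
  r v w := v = w ∨ v = -w
  iseqv := by
    refine ⟨fun v => Or.inl rfl, ?_, ?_⟩
    · rintro v w (rfl | rfl) <;> simp
    · rintro u v w (rfl | rfl) (h | h) <;> simp_all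

/-- The index set `ℤ² / ±1`. -/
abbrev Q2 := Quotient negRel

/-- The underlying vector space of the Frohman–Gelca algebra: the free `ℂ`-module on `ℤ²/±1`. -/
abbrev FG := Q2 →₀ ℂ

/-- The basis vector `e_{(p,q)}`. -/
def e (v : ℤ × ℤ) : FG := Finsupp.single (Quotient.mk negRel v) 1

lemma e_neg (v : ℤ × ℤ) : e (-v) = e v := by
  unfold e
  congr 1
  exact Quotient.sound (Or.inr rfl)

/-- The determinant `p s - q r`. -/
def det (v w : ℤ × ℤ) : ℤ := v.1 * w.2 - v.2 * w.1

/-- Product-to-sum formula on representatives. -/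
def mulB (t : ℂ) (v w : ℤ × ℤ) : FG :=
  t ^ (det v w) • e (v + w) + t ^ (-(det v w)) • e (v - w)

lemma mulB_negL (t : ℂ) (v w : ℤ × ℤ) : mulB t (-v) w = mulB t v w := by
  unfold mulB
  have hd : det (-v) w = -(det v w) := by simp [det]; ring
  rw [hd, neg_neg, show -v + w = -(v - w) by abel, show -v - w = -(v + w) by abel,
    e_neg, e_neg, add_comm]

lemma mulB_negR (t : ℂ) (v w : ℤ × ℤ) : mulB t v (-w) = mulB t v w := by
  unfold mulB
  have hd : det v (-w) = -(det v w) := by simp [det]; ring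
  rw [hd, neg_neg, show v + -w = v - w by abel, show v - -w = v + w by abel, add_comm]

/-- Product-to-sum formula on the quotient `ℤ²/±1`. -/
def qmulB (t : ℂ) : Q2 → Q2 → FG :=
  Quotient.lift₂ (mulB t) (by
    rintro a b a' b' (rfl | rfl) (rfl | rfl)
    · rfl
    · rw [mulB_negR]
    · rw [mulB_negL]
    · rw [mulB_negL, mulB_negR])

/-- Multiplication in the Frohman–Gelca algebra, extended bilinearly. -/
def fgMul (t : ℂ) (a b : FG) : FG :=
  a.sum fun x c => b.sum fun y d => (c * d) • qmulB t x y

/-- The span of commutators `C(A_t)`. -/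
def commSpan (t : ℂ) : Submodule ℂ FG :=
  Submodule.span ℂ {x | ∃ a b : FG, x = fgMul t a b - fgMul t b a}


/-- Class index: 0 = zero vector, then by parities. -/
def cls (v : ℤ × ℤ) : Fin 5 :=
  if v = 0 then 0
  else if v.1 % 2 = 0 then (if v.2 % 2 = 0 then 1 else 2)
  else (if v.2 % 2 = 0 then 3 else 4)

lemma cls_neg (v : ℤ × ℤ) : cls (-v) = cls v := by
  have h1 : ∀ a : ℤ, -a % 2 = a % 2 := by omega
  simp only [cls, neg_eq_zero, Prod.fst_neg, Prod.snd_neg, h1]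

lemma cls_eq_zero_iff (v : ℤ × ℤ) : cls v = 0 ↔ v = 0 := by
  unfold cls
  split_ifs <;> simp_all

lemma cls_eq_of_parity {x y : ℤ × ℤ} (hx : x ≠ 0) (hy : y ≠ 0)
    (h1 : x.1 % 2 = y.1 % 2) (h2 : x.2 % 2 = y.2 % 2) : cls x = cls y := by
  unfold cls
  rw [if_neg hx, if_neg hy]
  split_ifs <;> first | rfl | omega

lemma parity_of_cls_eq {x y : ℤ × ℤ} (hx : x ≠ 0) (hy : y ≠ 0)
    (h : cls x = cls y) : x.1 % 2 = y.1 % 2 ∧ x.2 % 2 = y.2 % 2 := by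
  unfold cls at h
  rw [if_neg hx, if_neg hy] at h
  split_ifs at h <;> first | omega | (exact absurd h (by decide))

def qcls : Q2 → Fin 5 :=
  Quotient.lift cls (by
    rintro a b (rfl | rfl)
    · rfl
    · exact cls_neg b)

def phi : FG →ₗ[ℂ] (Fin 5 → ℂ) :=
  Finsupp.linearCombination ℂ (fun q : Q2 => Pi.single (qcls q) (1 : ℂ))

lemma phi_e (v : ℤ × ℤ) : phi (e v) = Pi.single (cls v) (1 : ℂ) := by
  unfold phi e
  rw [Finsupp.linearCombination_single, one_smul]
  rfl

lemma cls_add_eq_sub {v w : ℤ × ℤ} (hd : det v w ≠ 0) : cls (v + w) = cls (v - w) := by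
  have hd' : v.1 * w.2 - v.2 * w.1 ≠ 0 := hd
  have h1 : v + w ≠ 0 := by
    intro h
    rw [Prod.ext_iff] at h
    simp only [Prod.fst_add, Prod.snd_add, Prod.fst_zero, Prod.snd_zero] at h
    apply hd'; linear_combination w.2 * h.1 - w.1 * h.2
  have h2 : v - w ≠ 0 := by
    intro h
    rw [Prod.ext_iff] at h
    simp only [Prod.fst_sub, Prod.snd_sub, Prod.fst_zero, Prod.snd_zero] at h
    apply hd'; linear_combination w.2 * h.1 - w.1 * h.2
  exact cls_eq_of_parity h1 h2 (by simp [Prod.fst_add, Prod.fst_sub]; omega)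
    (by simp [Prod.snd_add, Prod.snd_sub]; omega)
lemma phi_mulB_symm (t : ℂ) (v w : ℤ × ℤ) : phi (mulB t v w) = phi (mulB t w v) := by
  unfold mulB
  have h1 : w + v = v + w := add_comm _ _
  have h2 : w - v = -(v - w) := by abel
  have h3 : det w v = -det v w := by simp [det]; ring
  rw [h1, h2, h3, neg_neg, e_neg]
  by_cases hd : det v w = 0
  · rw [hd]; simp [add_comm]
  · rw [map_add, map_add, map_smul, map_smul, map_smul, map_smul, phi_e, phi_e,
      cls_add_eq_sub hd]
    exact add_comm _ _

lemma phi_qmulB_symm (t : ℂ) (x y : Q2) : phi (qmulB t x y) = phi (qmulB t y x) := by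
  induction x using Quotient.ind
  induction y using Quotient.ind
  exact phi_mulB_symm t _ _

lemma phi_fgMul (t : ℂ) (a b : FG) :
    phi (fgMul t a b) = a.sum fun x c => b.sum fun y d => (c * d) • phi (qmulB t x y) := by
  unfold fgMul
  rw [map_finsuppSum]
  refine Finsupp.sum_congr fun x _ => ?_
  rw [map_finsuppSum]
  exact Finsupp.sum_congr fun y _ => by rw [map_smul]

lemma phi_fgMul_symm (t : ℂ) (a b : FG) : phi (fgMul t a b) = phi (fgMul t b a) := by
  rw [phi_fgMul, phi_fgMul, Finsupp.sum_comm]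
  refine Finsupp.sum_congr fun x _ => Finsupp.sum_congr fun y _ => ?_
  rw [mul_comm, phi_qmulB_symm]

lemma commSpan_le_ker (t : ℂ) : commSpan t ≤ LinearMap.ker phi := by
  rw [commSpan, Submodule.span_le]
  rintro _ ⟨a, b, rfl⟩
  simp [LinearMap.mem_ker, map_sub, phi_fgMul_symm t a b]

def phibar (t : ℂ) : (FG ⧸ commSpan t) →ₗ[ℂ] (Fin 5 → ℂ) :=
  Submodule.liftQ (commSpan t) phi (commSpan_le_ker t)

lemma phibar_mk (t : ℂ) (x : FG) :
    phibar t (Submodule.Quotient.mk x) = phi x := rfl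

lemma fgMul_e_e (t : ℂ) (v w : ℤ × ℤ) : fgMul t (e v) (e w) = mulB t v w := by
  unfold fgMul e
  rw [Finsupp.sum_single_index (by simp), Finsupp.sum_single_index (by simp)]
  rw [one_mul, one_smul]
  rfl

lemma zpow_ne_one_of_ne (t : ℂ) (ht : t ≠ 0) (hroot : ∀ n : ℕ, 0 < n → t ^ n ≠ 1)
    (n : ℤ) (hn : n ≠ 0) : t ^ n ≠ 1 := by
  intro h
  rcases lt_or_gt_of_ne hn with h1 | h1
  · have h2 : t ^ ((-n).toNat : ℤ) = 1 := by
      rw [show ((-n).toNat : ℤ) = -n by omega, zpow_neg, h, inv_one]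
    rw [zpow_natCast] at h2
    exact hroot (-n).toNat (by omega) h2
  · have h2 : t ^ (n.toNat : ℤ) = 1 := by rw [show ((n).toNat : ℤ) = n by omega]; exact h
    rw [zpow_natCast] at h2
    exact hroot n.toNat (by omega) h2

lemma zpow_sub_zpow_ne (t : ℂ) (ht : t ≠ 0) (hroot : ∀ n : ℕ, 0 < n → t ^ n ≠ 1)
    (n : ℤ) (hn : n ≠ 0) : t ^ n - t ^ (-n) ≠ 0 := by
  intro h
  have h2 : t ^ (2 * n) = 1 := by
    have he : t ^ n = t ^ (-n) := by linear_combination h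
    calc t ^ (2 * n) = t ^ n * t ^ n := by rw [← zpow_add₀ ht]; ring_nf
    _ = t ^ n * t ^ (-n) := by rw [← he]
    _ = 1 := by rw [← zpow_add₀ ht]; simp
  exact zpow_ne_one_of_ne t ht hroot (2 * n) (by omega) h2
lemma diff_mem_of_det_ne {t : ℂ} (ht : t ≠ 0) (hroot : ∀ n : ℕ, 0 < n → t ^ n ≠ 1)
    {x y : ℤ × ℤ} (hp1 : x.1 % 2 = y.1 % 2) (hp2 : x.2 % 2 = y.2 % 2)
    (hd : det x y ≠ 0) : e x - e y ∈ commSpan t := by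
  obtain ⟨p, hp⟩ : ∃ p : ℤ, x.1 + y.1 = 2 * p := ⟨(x.1 + y.1) / 2, by omega⟩
  obtain ⟨q, hq⟩ : ∃ q : ℤ, x.2 + y.2 = 2 * q := ⟨(x.2 + y.2) / 2, by omega⟩
  obtain ⟨r, hr⟩ : ∃ r : ℤ, x.1 - y.1 = 2 * r := ⟨(x.1 - y.1) / 2, by omega⟩
  obtain ⟨s, hs⟩ : ∃ s : ℤ, x.2 - y.2 = 2 * s := ⟨(x.2 - y.2) / 2, by omega⟩
  set v : ℤ × ℤ := (p, q) with hv
  set w : ℤ × ℤ := (r, s) with hw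
  have hvw1 : v + w = x := by
    apply Prod.ext <;> simp [hv, hw] <;> omega
  have hvw2 : v - w = y := by
    apply Prod.ext <;> simp [hv, hw] <;> omega
  have hdet2 : 2 * det v w = -det x y := by
    have hdx : det x y = x.1 * y.2 - x.2 * y.1 := rfl
    have hdv : det v w = p * s - q * r := rfl
    have e1 : x.1 = p + r := by omega
    have e2 : y.1 = p - r := by omega
    have e3 : x.2 = q + s := by omega
    have e4 : y.2 = q - s := by omega
    rw [hdx, hdv, e1, e2, e3, e4]; ring
  have hdet : det v w ≠ 0 := by omega
  have hc : fgMul t (e v) (e w) - fgMul t (e w) (e v)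
      = (t ^ det v w - t ^ (-det v w)) • (e x - e y) := by
    rw [fgMul_e_e, fgMul_e_e]
    unfold mulB
    rw [show det w v = -det v w from by simp [det]; ring, neg_neg,
      show w + v = v + w from add_comm _ _, show w - v = -(v - w) from by abel,
      e_neg, hvw1, hvw2]
    module
  have hne := zpow_sub_zpow_ne t ht hroot (det v w) hdet
  have hmem : fgMul t (e v) (e w) - fgMul t (e w) (e v) ∈ commSpan t :=
    Submodule.subset_span ⟨e v, e w, rfl⟩
  have h2 := (commSpan t).smul_mem (t ^ det v w - t ^ (-det v w))⁻¹ hmem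
  rw [hc, smul_smul, inv_mul_cancel₀ hne, one_smul] at h2
  exact h2

lemma same_cls_mem {t : ℂ} (ht : t ≠ 0) (hroot : ∀ n : ℕ, 0 < n → t ^ n ≠ 1)
    {x y : ℤ × ℤ} (hcls : cls x = cls y) : e x - e y ∈ commSpan t := by
  by_cases hx : x = 0
  · have hy : y = 0 := by
      rw [← cls_eq_zero_iff]
      rw [← hcls, cls_eq_zero_iff]
      exact hx
    rw [hx, hy]
    simp
  by_cases hy : y = 0
  · exfalso
    apply hx
    rw [← cls_eq_zero_iff, hcls, cls_eq_zero_iff]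
    exact hy
  obtain ⟨hp1, hp2⟩ := parity_of_cls_eq hx hy hcls
  by_cases hd : det x y = 0
  · set z : ℤ × ℤ := (x.1 - 2 * x.2, x.2 + 2 * x.1) with hz
    have hx0 : x.1 ≠ 0 ∨ x.2 ≠ 0 := by
      by_contra h
      push_neg at h
      exact hx (Prod.ext h.1 h.2)
    have hz1 : det x z ≠ 0 := by
      have : det x z = 2 * x.1 ^ 2 + 2 * x.2 ^ 2 := by simp [det, hz]; ring
      rw [this]
      rcases hx0 with h | h <;> positivity
    have hz2 : det y z ≠ 0 := by
      intro h
      apply hz1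
      have hd' : x.1 * y.2 - x.2 * y.1 = 0 := hd
      have h' : y.1 * z.2 - y.2 * z.1 = 0 := h
      have hy0 : y.1 ≠ 0 ∨ y.2 ≠ 0 := by
        by_contra hc
        push_neg at hc
        exact hy (Prod.ext hc.1 hc.2)
      show x.1 * z.2 - x.2 * z.1 = 0
      rcases hy0 with h0 | h0
      · have : y.1 * (x.1 * z.2 - x.2 * z.1) = 0 := by linear_combination x.1 * h' + z.1 * hd'
        exact (mul_eq_zero.mp this).resolve_left h0
      · have : y.2 * (x.1 * z.2 - x.2 * z.1) = 0 := by linear_combination x.2 * h' + z.2 * hd'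
        exact (mul_eq_zero.mp this).resolve_left h0
    have hza : z.1 = x.1 - 2 * x.2 := rfl
    have hzb : z.2 = x.2 + 2 * x.1 := rfl
    have hstep1 : e x - e z ∈ commSpan t :=
      diff_mem_of_det_ne ht hroot (by rw [hza]; omega) (by rw [hzb]; omega) hz1
    have hstep2 : e z - e y ∈ commSpan t := by
      refine diff_mem_of_det_ne ht hroot (by rw [hza]; omega) (by rw [hzb]; omega) ?_
      intro hc
      apply hz2
      have : det y z = -det z y := by simp [det]; ring
      rw [this, hc, neg_zero]
    have := Submodule.add_mem _ hstep1 hstep2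
    rwa [sub_add_sub_cancel] at this
  · exact diff_mem_of_det_ne ht hroot hp1 hp2 hd
def rep5 : Fin 5 → ℤ × ℤ := ![(0, 0), (2, 0), (0, 1), (1, 0), (1, 1)]

lemma cls_rep5 : ∀ i : Fin 5, cls (rep5 i) = i := by decide

lemma phibar_e (t : ℂ) (v : ℤ × ℤ) :
    phibar t (Submodule.Quotient.mk (e v)) = Pi.single (cls v) (1 : ℂ) := by
  rw [phibar_mk, phi_e]

lemma single_indep : LinearIndependent ℂ (fun i : Fin 5 => (Pi.single i (1 : ℂ) : Fin 5 → ℂ)) := by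
  rw [Fintype.linearIndependent_iff]
  intro g hg j
  have h := congr_fun hg j
  simpa [Finset.sum_apply, Pi.single_apply] using h

theorem stmt15 (t : ℂ) (ht : t ≠ 0) (hroot : ∀ n : ℕ, 0 < n → t ^ n ≠ 1) :
    ((Submodule.Quotient.mk (e (0, 0)) : FG ⧸ commSpan t) ∉
      Submodule.span ℂ {(Submodule.Quotient.mk (e (2, 0)) : FG ⧸ commSpan t),
        Submodule.Quotient.mk (e (0, 1)),
        Submodule.Quotient.mk (e (1, 0)),
        Submodule.Quotient.mk (e (1, 1))}) ∧
    ∃ b : Module.Basis (Fin 5) ℂ (FG ⧸ commSpan t), ∀ i : Fin 5,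
      b i = ![(Submodule.Quotient.mk (e (0, 0)) : FG ⧸ commSpan t),
        Submodule.Quotient.mk (e (2, 0)),
        Submodule.Quotient.mk (e (0, 1)),
        Submodule.Quotient.mk (e (1, 0)),
        Submodule.Quotient.mk (e (1, 1))] i := by
  set fam : Fin 5 → FG ⧸ commSpan t :=
    fun i => Submodule.Quotient.mk (e (rep5 i)) with hfam
  have hphifam : ∀ i, phibar t (fam i) = Pi.single i (1 : ℂ) := by
    intro i
    rw [hfam]
    simp only []
    rw [phibar_e, cls_rep5]
  -- linear independence
  have hli : LinearIndependent ℂ fam := by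
    apply LinearIndependent.of_comp (phibar t)
    have : (phibar t) ∘ fam = fun i : Fin 5 => (Pi.single i (1 : ℂ) : Fin 5 → ℂ) := by
      funext i; exact hphifam i
    rw [this]
    exact single_indep
  -- spanning
  have hQspan : ∀ v : ℤ × ℤ,
      (Submodule.Quotient.mk (e v) : FG ⧸ commSpan t) ∈ Submodule.span ℂ (Set.range fam) := by
    intro v
    have heq : (Submodule.Quotient.mk (e v) : FG ⧸ commSpan t) = fam (cls v) := by
      rw [hfam]
      refine (Submodule.Quotient.eq _).mpr ?_
      exact same_cls_mem ht hroot (by rw [cls_rep5])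
    rw [heq]
    exact Submodule.subset_span ⟨cls v, rfl⟩
  have hspan : ⊤ ≤ Submodule.span ℂ (Set.range fam) := by
    intro x _
    obtain ⟨y, rfl⟩ := Submodule.Quotient.mk_surjective _ x
    induction y using Finsupp.induction_linear with
    | zero => simp
    | add a b ha hb =>
      rw [show (Submodule.Quotient.mk (a + b) : FG ⧸ commSpan t)
        = Submodule.Quotient.mk a + Submodule.Quotient.mk b from rfl]
      exact add_mem (ha trivial) (hb trivial)
    | single q c =>
      obtain ⟨v, rfl⟩ := Quotient.exists_rep q
      have h1 : Finsupp.single (⟦v⟧ : Q2) c = c • e v := by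
        simp [e, Finsupp.smul_single]
      rw [h1, Submodule.Quotient.mk_smul]
      exact Submodule.smul_mem _ _ (hQspan v)
  refine ⟨?_, ?_⟩
  · -- non-membership
    intro hmem
    have key : Submodule.span ℂ {(Submodule.Quotient.mk (e (2, 0)) : FG ⧸ commSpan t),
        Submodule.Quotient.mk (e (0, 1)),
        Submodule.Quotient.mk (e (1, 0)),
        Submodule.Quotient.mk (e (1, 1))}
        ≤ LinearMap.ker ((LinearMap.proj 0 : (Fin 5 → ℂ) →ₗ[ℂ] ℂ).comp (phibar t)) := by
      rw [Submodule.span_le]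
      intro x hx
      simp only [Set.mem_insert_iff, Set.mem_singleton_iff] at hx
      rcases hx with rfl | rfl | rfl | rfl <;>
        · rw [SetLike.mem_coe, LinearMap.mem_ker, LinearMap.comp_apply, phibar_e]
          simp [Pi.single_apply, cls]
    have h0 := key hmem
    rw [LinearMap.mem_ker, LinearMap.comp_apply, phibar_e] at h0
    have : cls ((0 : ℤ), (0 : ℤ)) = 0 := by decide
    rw [this] at h0
    simp at h0
  · refine ⟨Module.Basis.mk hli hspan, fun i => ?_⟩
    rw [Module.Basis.mk_apply]
    fin_cases i <;> simp [hfam, rep5]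

end
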